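/- Let c > 0, ε > 0, x* ∈ [0, c − ε], and let λ : [0,∞) → ℝ be continuous with λ(t) > 0 for all t. Let x : [0,∞) → ℝ be differentiable with x'(t) = λ(t)(x(t) − x*)(x(t) − c) for all t ≥ 0 and x(0) ∈ [0, c − ε]. Then x(t) ∈ [0, c − ε] for all t ≥ 0 and |x(t) − x*| ≤ |x(0) − x*| · exp(−ε ∫₀ᵗ λ(s) ds) for all t ≥ 0. -/

import Mathlib

open Set Filter

/-- Quantitative comparison bound in the proof of Lemma 3.4: for the controlled SIS ODE
`x' = λ(t) (x − x*) (x − c)` with `x* ∈ [0, c − ε]` and `x(0) ∈ [0, c − ε]`, the trajectory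
stays in `[0, c − ε]` and satisfies
`|x(t) − x*| ≤ |x(0) − x*| · exp (−ε ∫₀ᵗ λ(s) ds)`. -/
theorem stmt_14 (c ε : ℝ) (hc : 0 < c) (hε : 0 < ε)
    (xstar : ℝ) (hxstar : xstar ∈ Icc (0 : ℝ) (c - ε))
    (lam : ℝ → ℝ) (hlamc : Continuous lam) (hlam : ∀ t : ℝ, 0 < lam t)
    (x : ℝ → ℝ)
    (hx : ∀ t ≥ (0 : ℝ), HasDerivAt x (lam t * (x t - xstar) * (x t - c)) t)
    (hx0 : x 0 ∈ Icc (0 : ℝ) (c - ε)) :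
    ∀ t ≥ (0 : ℝ), x t ∈ Icc (0 : ℝ) (c - ε) ∧
      |x t - xstar| ≤ |x 0 - xstar| * Real.exp (-(ε * ∫ s in (0 : ℝ)..t, lam s)) := by
  have hxc : ∀ t ≥ (0:ℝ), ContinuousAt x t := fun t ht => (hx t ht).continuousAt
  -- Step 1: invariance of slightly enlarged intervals
  have key : ∀ δ : ℝ, 0 < δ → δ < ε → ∀ t ≥ (0:ℝ), x t ∈ Ioo (-δ) (c - ε + δ) := by
    intro δ hδ hδε
    by_contra hcon
    push_neg at hcon
    obtain ⟨t₀, ht₀, hxt₀⟩ := hcon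
    set S : Set ℝ := {t | 0 ≤ t ∧ x t ∉ Ioo (-δ) (c - ε + δ)} with hS
    have hne : S.Nonempty := ⟨t₀, ht₀, hxt₀⟩
    have hbdd : BddBelow S := ⟨0, fun s hs => hs.1⟩
    set T := sInf S with hTdef
    have hT0 : 0 ≤ T := le_csInf hne fun s hs => hs.1
    have hlow : ∀ s, 0 ≤ s → s < T → x s ∈ Ioo (-δ) (c - ε + δ) := by
      intro s hs hsT
      by_contra hmem
      exact absurd (csInf_le hbdd ⟨hs, hmem⟩) (not_le.mpr hsT)
    have hxT : x T ∉ Ioo (-δ) (c - ε + δ) := by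
      intro hmem
      have hco : ContinuousAt x T := hxc T hT0
      have hev : ∀ᶠ s in nhds T, x s ∈ Ioo (-δ) (c - ε + δ) :=
        hco.preimage_mem_nhds (isOpen_Ioo.mem_nhds hmem)
      obtain ⟨η, hη, hball⟩ := Metric.eventually_nhds_iff.mp hev
      obtain ⟨s, hsS, hslt⟩ := exists_lt_of_csInf_lt hne (show sInf S < T + η by
        rw [← hTdef]; linarith)
      have hsT : T ≤ s := csInf_le hbdd hsS
      exact hsS.2 (hball (show dist s T < η by
        rw [Real.dist_eq, abs_of_nonneg (by linarith [le_csInf hne fun u hu => hu.1] : (0:ℝ) ≤ s - T)]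
        linarith))
    have hx0' : x 0 ∈ Ioo (-δ) (c - ε + δ) :=
      ⟨by linarith [hx0.1], by linarith [hx0.2]⟩
    have hTpos : 0 < T := by
      rcases lt_or_eq_of_le hT0 with h | h
      · exact h
      · exact absurd (h ▸ hx0') hxT
    have hTten : Tendsto x (nhdsWithin T (Iio T)) (nhds (x T)) :=
      ((hxc T hT0).tendsto).mono_left nhdsWithin_le_nhds
    have hIoo : Ioo (0:ℝ) T ∈ nhdsWithin T (Iio T) :=
      Ioo_mem_nhdsLT_of_mem ⟨hTpos, le_refl T⟩
    have hxTIcc : x T ∈ Icc (-δ) (c - ε + δ) := by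
      refine isClosed_Icc.mem_of_tendsto hTten ?_
      filter_upwards [hIoo] with s hs
      exact Icc_subset_Icc (le_refl _) (le_refl _) (Ioo_subset_Icc_self (hlow s hs.1.le hs.2))
    have hd := hx T hT0
    have hslope : Tendsto (slope x T) (nhdsWithin T {T}ᶜ)
        (nhds (lam T * (x T - xstar) * (x T - c))) := hasDerivAt_iff_tendsto_slope.mp hd
    have hslope' : Tendsto (slope x T) (nhdsWithin T (Iio T))
        (nhds (lam T * (x T - xstar) * (x T - c))) :=
      hslope.mono_left (nhdsWithin_mono _ fun s hs => ne_of_lt hs)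
    have hboundary : x T = -δ ∨ x T = c - ε + δ := by
      rw [mem_Ioo, not_and_or, not_lt, not_lt] at hxT
      rcases hxT with h | h
      · exact Or.inl (le_antisymm h hxTIcc.1)
      · exact Or.inr (le_antisymm hxTIcc.2 h)
    rcases hboundary with hcase | hcase
    · -- x T = -δ : derivative positive but left slopes nonpositive
      have hdpos : 0 < lam T * (x T - xstar) * (x T - c) := by
        have h1 : x T - xstar < 0 := by rw [hcase]; linarith [hxstar.1]
        have h2 : x T - c < 0 := by rw [hcase]; linarith
        exact mul_pos_of_neg_of_neg (mul_neg_of_pos_of_neg (hlam T) h1) h2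
      have hdle : lam T * (x T - xstar) * (x T - c) ≤ 0 := by
        refine le_of_tendsto hslope' ?_
        filter_upwards [hIoo] with s hs
        rw [slope_def_field]
        apply div_nonpos_of_nonneg_of_nonpos
        · have := (hlow s hs.1.le hs.2).1
          rw [hcase]; linarith
        · linarith [hs.2]
      linarith
    · -- x T = c - ε + δ : derivative negative but left slopes nonnegative
      have hdneg : lam T * (x T - xstar) * (x T - c) < 0 := by
        have h1 : 0 < x T - xstar := by rw [hcase]; linarith [hxstar.2]
        have h2 : x T - c < 0 := by rw [hcase]; linarith
        exact mul_neg_of_pos_of_neg (mul_pos (hlam T) h1) h2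
      have hdge : 0 ≤ lam T * (x T - xstar) * (x T - c) := by
        refine ge_of_tendsto hslope' ?_
        filter_upwards [hIoo] with s hs
        rw [slope_def_field]
        rw [div_nonneg_iff]
        right
        have h4 := (hlow s hs.1.le hs.2).2
        exact ⟨by rw [hcase]; linarith, by linarith [hs.2]⟩
      linarith
  -- invariance of [0, c-ε]
  have inv : ∀ t ≥ (0:ℝ), x t ∈ Icc (0:ℝ) (c - ε) := by
    intro t ht
    constructor
    · by_contra h
      push_neg at h
      have hδ : (0:ℝ) < min (ε/2) (-(x t)/2) := lt_min (by linarith) (by linarith)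
      have h1 := ((key _ hδ (lt_of_le_of_lt (min_le_left _ _) (by linarith))) t ht).1
      have h2 := min_le_right (ε/2) (-(x t)/2)
      linarith
    · by_contra h
      push_neg at h
      have hδ : (0:ℝ) < min (ε/2) ((x t - (c - ε))/2) := lt_min (by linarith) (by linarith)
      have h1 := ((key _ hδ (lt_of_le_of_lt (min_le_left _ _) (by linarith))) t ht).2
      have h2 := min_le_right (ε/2) ((x t - (c - ε))/2)
      linarith
  -- Step 2: Lyapunov / Gronwall argument
  set L : ℝ → ℝ := fun t => ∫ s in (0:ℝ)..t, lam s with hLdef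
  have hL : ∀ t : ℝ, HasDerivAt L (lam t) t := fun t =>
    (hlamc.integral_hasStrictDerivAt 0 t).hasDerivAt
  set g : ℝ → ℝ := fun t => (x t - xstar)^2 * Real.exp (2*ε*L t) with hgdef
  have hg : ∀ t ≥ (0:ℝ), HasDerivAt g
      (2*lam t*Real.exp (2*ε*L t)*((x t - xstar)^2)*((x t - c) + ε)) t := by
    intro t ht
    have h1 : HasDerivAt (fun u => (x u - xstar)^2)
        ((2:ℕ) * (x t - xstar)^1 * (lam t * (x t - xstar) * (x t - c))) t :=
      ((hx t ht).sub_const xstar).pow 2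
    have h2 : HasDerivAt (fun u => Real.exp (2*ε*L u))
        (Real.exp (2*ε*L t) * (2*ε*lam t)) t := ((hL t).const_mul (2*ε)).exp
    have : HasDerivAt (fun u => (x u - xstar)^2 * Real.exp (2*ε*L u)) _ t := h1.mul h2
    convert this using 1
    push_cast
    ring
  have hg' : ∀ t ∈ interior (Ici (0:ℝ)), deriv g t ≤ 0 := by
    intro t ht
    rw [interior_Ici] at ht
    rw [(hg t ht.le).deriv]
    have hinv := inv t ht.le
    have hfac : (x t - c) + ε ≤ 0 := by linarith [hinv.2]
    have hnn : 0 ≤ 2*lam t*Real.exp (2*ε*L t)*((x t - xstar)^2) :=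
      mul_nonneg (mul_nonneg (mul_nonneg (by norm_num) (hlam t).le) (Real.exp_pos _).le)
        (sq_nonneg _)
    exact mul_nonpos_of_nonneg_of_nonpos hnn hfac
  have hcont : ContinuousOn g (Ici 0) := fun t ht => ((hg t ht).continuousAt).continuousWithinAt
  have hdiff : DifferentiableOn ℝ g (interior (Ici 0)) := by
    rw [interior_Ici]
    exact fun t ht => ((hg t ht.le).differentiableAt).differentiableWithinAt
  have hanti : AntitoneOn g (Ici 0) :=
    antitoneOn_of_deriv_nonpos (convex_Ici 0) hcont hdiff hg'
  intro t ht
  refine ⟨inv t ht, ?_⟩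
  have hgt : g t ≤ g 0 := hanti self_mem_Ici ht ht
  have hL0 : L 0 = 0 := intervalIntegral.integral_same
  have hg0 : g 0 = (x 0 - xstar)^2 := by
    simp [hgdef, hL0]
  have hexp : Real.exp (-(ε * L t))^2 = Real.exp (-(2*ε*L t)) := by
    rw [sq, ← Real.exp_add]; ring_nf
  have key2 : (x t - xstar)^2 ≤ (|x 0 - xstar| * Real.exp (-(ε * L t)))^2 := by
    have hEpos : 0 < Real.exp (2*ε*L t) := Real.exp_pos _
    rw [mul_pow, sq_abs, hexp]
    have hg0' : (x t - xstar)^2 * Real.exp (2*ε*L t) ≤ (x 0 - xstar)^2 := hg0 ▸ hgt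
    rw [Real.exp_neg, ← div_eq_mul_inv, le_div_iff₀ hEpos]
    exact hg0'
  show |x t - xstar| ≤ |x 0 - xstar| * Real.exp (-(ε * L t))
  calc |x t - xstar| = Real.sqrt ((x t - xstar)^2) := (Real.sqrt_sq_eq_abs _).symm
    _ ≤ Real.sqrt ((|x 0 - xstar| * Real.exp (-(ε * L t)))^2) := Real.sqrt_le_sqrt key2
    _ = |x 0 - xstar| * Real.exp (-(ε * L t)) := by
        rw [Real.sqrt_sq_eq_abs, abs_of_nonneg (by positivity)]
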